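/- For all n ≥ 0, 0 ≤ 2k ≤ n, 1 ≤ j ≤ dim H_{n-2k}^d and every ξ ∈ S^{d-1}, the orthonormal basis polynomial f_{k,j}^n satisfies f_{k,j}^n(ξ) = H_n · Y_{j,n-2k}(ξ), where H_n = √((n+d/2)/(d/2)); in particular the constant H_n is independent of k and j. -/

import Mathlib

open MeasureTheory Real Finset Filter Topology RealInnerProductSpace

noncomputable section

/-- `ℝ^d` with the Euclidean structure. -/
abbrev Esp (d : ℕ) := EuclideanSpace ℝ (Fin d)

/-- The Radon transform `R f(ξ, t)`: integral of `f` over the hyperplane `⟨ξ, x⟩ = t`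
intersected with the closed unit ball `B^d` (for `f` supported in `B^d` this is the integral
over the whole hyperplane). -/
def radon {d : ℕ} (f : Esp d → ℝ) (ξ : Esp d) (t : ℝ) : ℝ :=
  ∫ y in {y : ((ℝ ∙ ξ)ᗮ : Submodule ℝ (Esp d)) |
      t • ξ + (y : Esp d) ∈ Metric.closedBall (0 : Esp d) 1},
    f (t • ξ + (y : Esp d))

/-- The surface measure `dω` on the unit sphere `S^{d-1}`. -/
def sphereMeasure (d : ℕ) : Measure (Metric.sphere (0 : Esp d) 1) :=
  (volume : Measure (Esp d)).toSphere

/-- `σ_d = 2 π^{d/2} / Γ(d/2)`, the surface area of `S^{d-1}`. -/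
def sigmaConst (d : ℕ) : ℝ := 2 * Real.pi ^ ((d : ℝ) / 2) / Real.Gamma ((d : ℝ) / 2)

/-- `b_d = π^{d/2} / Γ((d+2)/2)`, the volume of the unit ball `B^d`. -/
def ballVol (d : ℕ) : ℝ := Real.pi ^ ((d : ℝ) / 2) / Real.Gamma (((d : ℝ) + 2) / 2)

/-- `c_λ = Γ(1/2) Γ(λ+1/2) / Γ(λ+1)`, normalization constant of `(1-t²)^{λ-1/2}` on `[-1,1]`. -/
def cConst (lam : ℝ) : ℝ := Real.Gamma (1 / 2) * Real.Gamma (lam + 1 / 2) / Real.Gamma (lam + 1)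

/-- Pochhammer symbol `(a)_k = a (a+1) ⋯ (a+k-1)`. -/
def poch (a : ℝ) (k : ℕ) : ℝ := ∏ i ∈ Finset.range k, (a + i)

/-- The Gegenbauer polynomial `C_n^λ(t)`, normalized by
`c_λ ∫_{-1}^1 C_k^λ C_l^λ (1-t²)^{λ-1/2} dt = (λ (2λ)_k / ((k+λ) k!)) δ_{k,l}`. -/
def gegen (lam : ℝ) (n : ℕ) (t : ℝ) : ℝ :=
  ∑ k ∈ Finset.range (n / 2 + 1),
    (-1 : ℝ) ^ k * Real.Gamma ((n : ℝ) - k + lam) /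
      (Real.Gamma lam * (Nat.factorial k) * (Nat.factorial (n - 2 * k))) * (2 * t) ^ (n - 2 * k)

/-- `h_n^{(λ)} = λ (2λ)_n / ((n+λ) n!)`, the square of the norm of `C_n^λ`. -/
def hGegen (lam : ℝ) (n : ℕ) : ℝ := lam * poch (2 * lam) n / (((n : ℝ) + lam) * n.factorial)

/-- The kernel `Φ_n(t,u) = Σ_{k=0}^n ((k+d/2)/(d/2)) C_k^{d/2}(t) C_k^{d/2}(u)`. -/
def Phi (d n : ℕ) (t u : ℝ) : ℝ :=
  ∑ k ∈ Finset.range (n + 1),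
    (((k : ℝ) + (d : ℝ) / 2) / ((d : ℝ) / 2)) * gegen ((d : ℝ) / 2) k t * gegen ((d : ℝ) / 2) k u

/-- The Jacobi polynomial `P_n^{(a,b)}`. -/
def jacobiP (a b : ℝ) (n : ℕ) (x : ℝ) : ℝ :=
  ∑ s ∈ Finset.range (n + 1),
    (Real.Gamma (a + n + 1) / (Real.Gamma (a + s + 1) * Nat.factorial (n - s))) *
      (Real.Gamma (b + n + 1) / (Real.Gamma (b + (n : ℝ) - s + 1) * Nat.factorial s)) *
      ((x - 1) / 2) ^ s * ((x + 1) / 2) ^ (n - s)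

/-- `h_k^{(a,b)}`, the square of the norm of `P_k^{(a,b)}` for the normalized Jacobi weight. -/
def hJacobi (a b : ℝ) (k : ℕ) : ℝ :=
  poch (a + 1) k * poch (b + 1) k * (a + b + k + 1) /
    (k.factorial * poch (a + b + 2) k * (a + b + 2 * k + 1))

/-- The orthonormal Jacobi polynomial `p_k^{(a,b)} = [h_k^{(a,b)}]^{-1/2} P_k^{(a,b)}`. -/
def jacobiOrtho (a b : ℝ) (k : ℕ) (x : ℝ) : ℝ := jacobiP a b k x / Real.sqrt (hJacobi a b k)

/-- The constant `h_{n,k}` with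
`h_{n,k}² = Γ((d+2)/2) Γ(n-2k+d/2) / (Γ(d/2) Γ(n-2k+(d+2)/2))`. -/
def hnk (d n k : ℕ) : ℝ :=
  Real.sqrt (Real.Gamma (((d : ℝ) + 2) / 2) * Real.Gamma ((n : ℝ) - 2 * k + (d : ℝ) / 2) /
    (Real.Gamma ((d : ℝ) / 2) * Real.Gamma ((n : ℝ) - 2 * k + ((d : ℝ) + 2) / 2)))

/-- The orthonormal basis element
`f_{k,j}^n(x) = h_{n,k}^{-1} p_k^{(0, n-2k+(d-2)/2)}(2‖x‖²-1) Y(x)` of `V_n^d`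
(for the Lebesgue measure, i.e. `μ = 1/2`), built from a spherical harmonic `Y` of
degree `n - 2k`. -/
def fkjBasis (d n k : ℕ) (Y : Esp d → ℝ) (x : Esp d) : ℝ :=
  (hnk d n k)⁻¹ * jacobiOrtho 0 ((n : ℝ) - 2 * k + ((d : ℝ) - 2) / 2) k (2 * ‖x‖ ^ 2 - 1) * Y x

/-- `g_{k,j}^n(ξ,t) = [h_n^{(d/2)}]^{-1/2} (1-t²)^{(d-1)/2} C_n^{d/2}(t) Y(ξ)`,
built from a spherical harmonic `Y` of degree `n - 2k`. -/
def gkjBasis (d n : ℕ) (Y : Esp d → ℝ) (ξ : Esp d) (t : ℝ) : ℝ :=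
  (Real.sqrt (hGegen ((d : ℝ) / 2) n))⁻¹ * (1 - t ^ 2) ^ (((d : ℝ) - 1) / 2) *
    gegen ((d : ℝ) / 2) n t * Y ξ

/-- `P : ℝ^d → ℝ` is (the evaluation of) a polynomial of total degree at most `n`. -/
def IsPolyDeg (d n : ℕ) (P : Esp d → ℝ) : Prop :=
  ∃ p : MvPolynomial (Fin d) ℝ, p.totalDegree ≤ n ∧
    ∀ x : Esp d, P x = MvPolynomial.eval (fun i => x i) p

/-- `P ∈ V_n^d`: `P` is a polynomial of degree at most `n` which is orthogonal, in
`L²(B^d, dx)`, to all polynomials of total degree `< n`. -/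
def MemV (d n : ℕ) (P : Esp d → ℝ) : Prop :=
  IsPolyDeg d n P ∧
    ∀ Q : Esp d → ℝ,
      (∃ q : MvPolynomial (Fin d) ℝ, q.totalDegree < n ∧
          ∀ x : Esp d, Q x = MvPolynomial.eval (fun i => x i) q) →
      ∫ x in Metric.closedBall (0 : Esp d) 1, P x * Q x = 0

/-- `p = proj_n f`, the orthogonal projection of `f` onto `V_n^d` in
`L²(B^d, b_d^{-1} dx)`: `p ∈ V_n^d` and `f - p ⟂ V_n^d`. -/
def IsProjOn (d n : ℕ) (f p : Esp d → ℝ) : Prop :=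
  MemV d n p ∧ ∀ Q : Esp d → ℝ, MemV d n Q →
    ∫ x in Metric.closedBall (0 : Esp d) 1, (f x - p x) * Q x = 0

/-- `P` is harmonic: its Laplacian vanishes identically. -/
def IsHarmonicFn {d : ℕ} (P : Esp d → ℝ) : Prop :=
  ∀ x : Esp d, ∑ i : Fin d,
    iteratedFDeriv ℝ 2 P x ![EuclideanSpace.single i 1, EuclideanSpace.single i 1] = 0

/-- `P` is homogeneous of degree `m`. -/
def IsHomogeneousDeg {d : ℕ} (m : ℕ) (P : Esp d → ℝ) : Prop :=
  ∀ (c : ℝ) (x : Esp d), P (c • x) = c ^ m * P x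

/-- `Y` is a (solid) spherical harmonic of degree `m`: a harmonic homogeneous
polynomial of degree `m`. -/
def IsSphHarm (d m : ℕ) (Y : Esp d → ℝ) : Prop :=
  IsPolyDeg d m Y ∧ IsHomogeneousDeg m Y ∧ IsHarmonicFn Y

/-- The inner product of `L²(Z, w^{1-d})`, `Z = S^{d-1} × [-1,1]`:
`⟨F,G⟩ = c_{d/2} ∫_{-1}^1 σ_d^{-1} ∫_{S^{d-1}} F(ξ,t) G(ξ,t) dω(ξ) (1-t²)^{(1-d)/2} dt`. -/
def innerZ (d : ℕ) (F G : Esp d → ℝ → ℝ) : ℝ :=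
  cConst ((d : ℝ) / 2) * ∫ t in (-1 : ℝ)..1,
    ((sigmaConst d)⁻¹ * ∫ ξ : Metric.sphere (0 : Esp d) 1, F ξ t * G ξ t ∂(sphereMeasure d)) *
      (1 - t ^ 2) ^ ((1 - (d : ℝ)) / 2)

/-- The inner product of `L²(B^d, b_d^{-1} dx)`. -/
def innerB (d : ℕ) (f g : Esp d → ℝ) : ℝ :=
  (ballVol d)⁻¹ * ∫ x in Metric.closedBall (0 : Esp d) 1, f x * g x

/-- The singular values `γ_n = b_{d-1} √(n!/(d)_n)` of the Radon transform. -/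
def svGamma (d n : ℕ) : ℝ := ballVol (d - 1) * Real.sqrt (n.factorial / poch (d : ℝ) n)


/-- The Chebyshev polynomial of the second kind `U_k`. -/
def chebU (k : ℕ) (t : ℝ) : ℝ := (Polynomial.Chebyshev.U ℝ (k : ℤ)).eval t

/-- The kernel `Φ_n(t,u) = Σ_{k=0}^n (k+1) U_k(t) U_k(u)` (the case `d = 2` of `Φ_n`). -/
def PhiU (n : ℕ) (t u : ℝ) : ℝ :=
  ∑ k ∈ Finset.range (n + 1), ((k : ℝ) + 1) * chebU k t * chebU k u

/-- The point `(cos θ, sin θ)` on the unit circle `S¹ ⊆ ℝ²`. -/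
def circlePt (θ : ℝ) : Esp 2 := (WithLp.equiv 2 (Fin 2 → ℝ)).symm ![Real.cos θ, Real.sin θ]

end

lemma poch_succ (a : ℝ) (k : ℕ) : poch a (k+1) = poch a k * (a + k) := by
  simp [poch, Finset.prod_range_succ]

lemma poch_succ' (a : ℝ) (k : ℕ) : poch a (k+1) = a * poch (a+1) k := by
  rw [poch, Finset.prod_range_succ', poch]
  rw [Finset.prod_congr rfl (fun i _ => show a + ((i+1 : ℕ) : ℝ) = (a+1) + i by push_cast; ring)]
  push_cast
  ring

lemma poch_one_eq (k : ℕ) : poch (1:ℝ) k = k.factorial := by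
  rw [← Finset.prod_range_add_one_eq_factorial k, poch]
  push_cast
  exact Finset.prod_congr rfl fun i _ => by ring

lemma poch_pos {a : ℝ} (ha : 0 < a) (k : ℕ) : 0 < poch a k :=
  Finset.prod_pos fun i _ => by positivity

lemma jacobiP_zero_at_one (b : ℝ) (k : ℕ) (hb : Real.Gamma (b + k + 1) ≠ 0) :
    jacobiP 0 b k 1 = 1 := by
  unfold jacobiP
  rw [Finset.sum_eq_single 0]
  · have h1 : ((0:ℝ) + k + 1) = (k:ℝ) + 1 := by ring
    have h2 : Real.Gamma ((k:ℝ) + 1) = k.factorial := Real.Gamma_nat_eq_factorial k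
    simp only [Nat.cast_zero, sub_zero, Nat.sub_zero, pow_zero, Nat.factorial_zero,
      Nat.cast_one, mul_one]
    rw [h1, h2]
    have h3 : ((0:ℝ) + 0 + 1) = 1 := by ring
    rw [h3, Real.Gamma_one]
    have h4 : ((1:ℝ) + 1) / 2 = 1 := by norm_num
    rw [h4, one_pow]
    have hf : ((k.factorial : ℝ)) ≠ 0 := by positivity
    field_simp
  · intro s _ hs0
    have h0 : ((1:ℝ) - 1) / 2 = 0 := by norm_num
    rw [h0, zero_pow hs0]
    ring
  · intro h
    exact absurd (Finset.mem_range.mpr (Nat.succ_pos k)) h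

lemma hJacobi_zero_eq (b : ℝ) (k : ℕ) (hb : 0 < b + 1) :
    hJacobi 0 b k = (b + 1) / (b + 2 * k + 1) := by
  have hb2 : (0:ℝ) < b + 2 := by linarith
  have key : poch (b+1) k * (b + 1 + k) = (b+1) * poch (b+2) k := by
    have h1 := poch_succ (b+1) k
    have h2 := poch_succ' (b+1) k
    have : b + 1 + 1 = b + 2 := by ring
    rw [this] at h2
    linarith [h1, h2]
  unfold hJacobi
  have e1 : (0:ℝ) + 1 = 1 := by ring
  have e2 : (0:ℝ) + b + 2 = b + 2 := by ring
  have e3 : (0:ℝ) + b + k + 1 = b + 1 + k := by ring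
  have e4 : (0:ℝ) + b + 2 * k + 1 = b + 2 * k + 1 := by ring
  rw [e1, e2, e3, e4, poch_one_eq]
  have hfk : ((k.factorial : ℝ)) ≠ 0 := by positivity
  have hpk : poch (b+2) k ≠ 0 := ne_of_gt (poch_pos hb2 k)
  have hk0 : (0:ℝ) ≤ (k:ℝ) := Nat.cast_nonneg k
  have hbk : (b + 2 * k + 1) ≠ 0 := by nlinarith
  field_simp
  rw [key]

/-- For `0 ≤ 2k ≤ n` and a spherical harmonic `Y` of degree `n - 2k`
(member of an orthonormal basis of `H_{n-2k}^d`), the orthonormal basis polynomial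
`f_{k,j}^n` satisfies, for every `ξ ∈ S^{d-1}`,
`f_{k,j}^n(ξ) = H_n · Y(ξ)` with `H_n = √((n+d/2)/(d/2))` independent of `k` and `j`. -/
theorem fkj_on_sphere (d n k : ℕ) (hd : 1 ≤ d) (hk : 2 * k ≤ n)
    (Y : Esp d → ℝ) (hY : IsSphHarm d (n - 2 * k) Y)
    (hYnorm : (sigmaConst d)⁻¹ *
        (∫ ξ : Metric.sphere (0 : Esp d) 1, Y (ξ : Esp d) * Y (ξ : Esp d) ∂(sphereMeasure d)) = 1)
    (ξ : Esp d) (hξ : ‖ξ‖ = 1) :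
    fkjBasis d n k Y ξ = Real.sqrt (((n : ℝ) + (d : ℝ) / 2) / ((d : ℝ) / 2)) * Y ξ := by
  have hd1 : (1:ℝ) ≤ (d:ℝ) := by exact_mod_cast hd
  have hd2 : (0:ℝ) < (d:ℝ)/2 := by linarith
  have hc : (0:ℝ) ≤ (n:ℝ) - 2*(k:ℝ) := by
    have : ((2*k : ℕ):ℝ) ≤ ((n:ℕ):ℝ) := by exact_mod_cast hk
    push_cast at this; linarith
  have hk0 : (0:ℝ) ≤ (k:ℝ) := Nat.cast_nonneg k
  have hξ2 : 2 * ‖ξ‖^2 - 1 = 1 := by rw [hξ]; norm_num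
  unfold fkjBasis jacobiOrtho hnk
  rw [hξ2]
  set b : ℝ := (n:ℝ) - 2*(k:ℝ) + ((d:ℝ)-2)/2 with hbdef
  set c : ℝ := (n:ℝ) - 2*(k:ℝ) with hcdef
  set δ : ℝ := (d:ℝ)/2 with hδdef
  have hb1 : b + 1 = c + δ := by rw [hbdef, hcdef, hδdef]; ring
  have hb1pos : 0 < b + 1 := by rw [hb1]; linarith
  have hbk1 : b + 2*(k:ℝ) + 1 = (n:ℝ) + δ := by rw [hbdef, hδdef]; ring
  have hΓne : Real.Gamma (b + (k:ℝ) + 1) ≠ 0 := by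
    apply ne_of_gt; apply Real.Gamma_pos_of_pos
    rw [hbdef]; linarith
  rw [jacobiP_zero_at_one _ _ hΓne, hJacobi_zero_eq _ _ hb1pos, hb1, hbk1]
  have e1 : ((d:ℝ)+2)/2 = δ + 1 := by rw [hδdef]; ring
  have e2 : (n:ℝ) - 2*(k:ℝ) + ((d:ℝ)+2)/2 = (c + δ) + 1 := by rw [hcdef, hδdef]; ring
  have e3 : (n:ℝ) - 2*(k:ℝ) + (d:ℝ)/2 = c + δ := by rw [hcdef, hδdef]
  have hcd : (0:ℝ) < c + δ := by linarith
  rw [e1, (show c + (δ + 1) = (c + δ) + 1 by ring), Real.Gamma_add_one (ne_of_gt hd2),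
    Real.Gamma_add_one (ne_of_gt hcd)]
  have hΓδ : 0 < Real.Gamma δ := Real.Gamma_pos_of_pos hd2
  have hΓcδ : 0 < Real.Gamma (c + δ) := Real.Gamma_pos_of_pos (by linarith)
  have hin : δ * Real.Gamma δ * Real.Gamma (c + δ) /
      (Real.Gamma δ * ((c + δ) * Real.Gamma (c + δ))) = δ / (c + δ) := by
    field_simp
  rw [hin]
  have hnδ : (0:ℝ) < (n:ℝ) + δ := by
    have : (0:ℝ) ≤ (n:ℝ) := Nat.cast_nonneg n
    linarith
  have key : (Real.sqrt (δ / (c + δ)))⁻¹ * (Real.sqrt ((c + δ) / ((n:ℝ) + δ)))⁻¹ =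
      Real.sqrt (((n:ℝ) + δ) / δ) := by
    rw [← Real.sqrt_inv, ← Real.sqrt_inv, ← Real.sqrt_mul (by positivity)]
    congr 1
    field_simp
  rw [one_div, key]
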